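/- arXiv:2108.04995 — 2 statements merged into one kernel-verified Lean document; each statement's English description precedes it below -/
import Mathlib

section
/- Let (σ1, σ3, τ) be a wheel frame of a code C on n neurons. Then for every realization U of C in ℝ^d there exists σ2 ⊆ [n] such that the tuple (σ1, σ2, σ3, τ) satisfies the wheel conditions W(i), W(ii), W(iii) for U. Consequently C is non-convex: for no dimension d does C admit a realization in ℝ^d by convex open sets. -/
namespace NeuralCode

/-- `USet U σ` is `U_σ = ⋂ i ∈ σ, U i` (the whole space when `σ = ∅`). -/
def USet {ι : Type*} {d : ℕ} (U : ι → Set (EuclideanSpace ℝ (Fin d))) (σ : Finset ι) :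
    Set (EuclideanSpace ℝ (Fin d)) :=
  ⋂ i ∈ σ, U i

/-- The atom of the codeword `c` in the family `U`. -/
def codeAtom {ι : Type*} {d : ℕ} (U : ι → Set (EuclideanSpace ℝ (Fin d))) (c : Finset ι) :
    Set (EuclideanSpace ℝ (Fin d)) :=
  USet U c \ ⋃ j ∉ c, U j

/-- The family `U` (of open sets) is a realization of the code `C`. -/
def IsRealization {ι : Type*} {d : ℕ} (C : Set (Finset ι))
    (U : ι → Set (EuclideanSpace ℝ (Fin d))) : Prop :=
  (∀ i, IsOpen (U i)) ∧ ∀ c : Finset ι, c ∈ C ↔ (codeAtom U c).Nonempty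

/-- The code `C` is convex: for some dimension `d` it admits a realization in `ℝ^d`
by convex open sets. -/
def IsConvexCode {ι : Type*} (C : Set (Finset ι)) : Prop :=
  ∃ (d : ℕ) (U : ι → Set (EuclideanSpace ℝ (Fin d))),
    IsRealization C U ∧ ∀ i, Convex ℝ (U i)

/-- The trunk of `σ` in `C`: the set of codewords containing `σ`. -/
def trunk {ι : Type*} (C : Set (Finset ι)) (σ : Finset ι) : Set (Finset ι) :=
  {c | c ∈ C ∧ σ ⊆ c}

/-- The neural complex `Δ(C)` of `C`. -/
def neuralComplex {ι : Type*} (C : Set (Finset ι)) : Set (Finset ι) :=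
  {σ | ∃ c ∈ C, σ ⊆ c}

/-- Condition W(i). -/
def WheelWi {ι : Type*} {d : ℕ} (U : ι → Set (EuclideanSpace ℝ (Fin d)))
    (σ1 σ2 σ3 : Finset ι) : Prop :=
  USet U σ1 ∩ USet U σ2 = USet U σ1 ∩ USet U σ2 ∩ USet U σ3 ∧
    USet U σ1 ∩ USet U σ3 = USet U σ1 ∩ USet U σ2 ∩ USet U σ3 ∧
    USet U σ2 ∩ USet U σ3 = USet U σ1 ∩ USet U σ2 ∩ USet U σ3 ∧
    (USet U σ1 ∩ USet U σ2 ∩ USet U σ3).Nonempty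

/-- Condition W(ii). -/
def WheelWii {ι : Type*} {d : ℕ} (U : ι → Set (EuclideanSpace ℝ (Fin d)))
    (σ1 σ2 σ3 τ : Finset ι) : Prop :=
  USet U σ1 ∩ USet U σ2 ∩ USet U σ3 ∩ USet U τ = ∅

/-- Condition W(iii). -/
def WheelWiii {ι : Type*} {d : ℕ} (U : ι → Set (EuclideanSpace ℝ (Fin d)))
    (σ1 σ2 σ3 τ : Finset ι) : Prop :=
  (Convex ℝ (USet U τ) ∧ Convex ℝ (USet U σ1 ∩ USet U τ) ∧
      Convex ℝ (USet U σ2 ∩ USet U τ) ∧ Convex ℝ (USet U σ3 ∩ USet U τ)) →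
    ∃ x ∈ USet U σ1 ∩ USet U τ, ∃ y ∈ USet U σ3 ∩ USet U τ,
      (segment ℝ x y ∩ (USet U σ2 ∩ USet U τ)).Nonempty

/-- Condition W(iii)◦. -/
def WheelWiiiCirc {ι : Type*} {d : ℕ} (U : ι → Set (EuclideanSpace ℝ (Fin d)))
    (σ1 σ2 σ3 τ : Finset ι) : Prop :=
  (USet U σ1 ∩ USet U τ).Nonempty ∧ (USet U σ2 ∩ USet U τ).Nonempty ∧
    (USet U σ3 ∩ USet U τ).Nonempty

/-- `(σ1, σ2, σ3, τ)` is a wheel of the realization `U`. -/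
def IsWheelOfRealization {ι : Type*} {d : ℕ} (U : ι → Set (EuclideanSpace ℝ (Fin d)))
    (σ1 σ2 σ3 τ : Finset ι) : Prop :=
  WheelWi U σ1 σ2 σ3 ∧ WheelWii U σ1 σ2 σ3 τ ∧ WheelWiii U σ1 σ2 σ3 τ

/-- Condition P(i). -/
def CondPi {ι : Type*} [DecidableEq ι] (C : Set (Finset ι)) (σ1 σ2 σ3 : Finset ι) : Prop :=
  σ1 ∪ σ2 ∪ σ3 ∈ neuralComplex C ∧
    trunk C (σ1 ∪ σ2) = trunk C (σ1 ∪ σ2 ∪ σ3) ∧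
    trunk C (σ1 ∪ σ3) = trunk C (σ1 ∪ σ2 ∪ σ3) ∧
    trunk C (σ2 ∪ σ3) = trunk C (σ1 ∪ σ2 ∪ σ3)

/-- Condition P(ii). -/
def CondPii {ι : Type*} [DecidableEq ι] (C : Set (Finset ι)) (σ1 σ2 σ3 τ : Finset ι) : Prop :=
  σ1 ∪ σ2 ∪ σ3 ∪ τ ∉ neuralComplex C

/-- Condition P(iii)◦. -/
def CondPiiiCirc {ι : Type*} [DecidableEq ι] (C : Set (Finset ι)) (σ1 σ2 σ3 τ : Finset ι) :
    Prop :=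
  σ1 ∪ τ ∈ neuralComplex C ∧ σ2 ∪ τ ∈ neuralComplex C ∧ σ3 ∪ τ ∈ neuralComplex C

/-- `(σ1, σ2, σ3, τ)` is a sprocket of `C`. -/
def IsSprocket {ι : Type*} [DecidableEq ι] (C : Set (Finset ι)) (σ1 σ2 σ3 τ : Finset ι) :
    Prop :=
  σ1 ∈ neuralComplex C ∧ σ2 ∈ neuralComplex C ∧ σ3 ∈ neuralComplex C ∧
    τ ∈ neuralComplex C ∧
    CondPi C σ1 σ2 σ3 ∧ CondPii C σ1 σ2 σ3 τ ∧ CondPiiiCirc C σ1 σ2 σ3 τ ∧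
    ∃ ρ1 ∈ neuralComplex C, ∃ ρ3 ∈ neuralComplex C,
      trunk C (σ1 ∪ τ) ⊆ trunk C ρ1 ∧ trunk C (σ3 ∪ τ) ⊆ trunk C ρ3 ∧
      trunk C τ ⊆ trunk C ρ1 ∪ trunk C ρ3 ∧
      trunk C (ρ1 ∪ ρ3 ∪ τ) ⊆ trunk C σ2

/-- `F` is a facet of `Δ(C)`: an inclusion-maximal codeword of `C`. -/
def IsFacet {ι : Type*} (C : Set (Finset ι)) (F : Finset ι) : Prop :=
  F ∈ C ∧ ∀ c ∈ C, F ⊆ c → c = F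

/-- `τ` is a max-intersection face of `Δ(C)`: a face equal to the intersection of two or
more distinct facets. -/
def IsMaxIntersectionFace {ι : Type*} [DecidableEq ι] [Fintype ι] (C : Set (Finset ι))
    (τ : Finset ι) : Prop :=
  τ ∈ neuralComplex C ∧
    ∃ S : Finset (Finset ι), 2 ≤ S.card ∧ (∀ F ∈ S, IsFacet C F) ∧ τ = S.inf id

/-- The link graph of `τ` in `Δ(C)`. -/
def linkGraph {ι : Type*} [DecidableEq ι] (C : Set (Finset ι)) (τ : Finset ι) :
    SimpleGraph {i : ι // i ∉ τ ∧ insert i τ ∈ neuralComplex C} where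
  Adj a b := a ≠ b ∧ τ ∪ {(a : ι), (b : ι)} ∈ neuralComplex C
  symm := ⟨fun a b h => ⟨h.1.symm, by rw [Finset.pair_comm]; exact h.2⟩⟩
  loopless := ⟨fun a h => h.1 rfl⟩

/-- `(σ1, σ2, σ3, τ)` is a wire wheel of `C`. -/
def IsWireWheel {ι : Type*} [DecidableEq ι] (C : Set (Finset ι)) (σ1 σ2 σ3 τ : Finset ι) :
    Prop :=
  σ1 ∈ neuralComplex C ∧ σ2 ∈ neuralComplex C ∧ σ3 ∈ neuralComplex C ∧
    τ ∈ neuralComplex C ∧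
    CondPi C σ1 σ2 σ3 ∧ CondPii C σ1 σ2 σ3 τ ∧ τ ∉ C ∧
    (∀ ω : Finset ι, ω.card = 3 → Disjoint ω τ → τ ∪ ω ∉ neuralComplex C) ∧
    (linkGraph C τ).IsTree ∧
    ∃ v1 v2 v3 : {i : ι // i ∉ τ ∧ insert i τ ∈ neuralComplex C},
      σ1 \ τ = {(v1 : ι)} ∧ σ2 \ τ = {(v2 : ι)} ∧ σ3 \ τ = {(v3 : ι)} ∧
      ∀ p : (linkGraph C τ).Walk v1 v3, p.IsPath → v2 ∈ p.support

/-- `(σ1, σ3, τ)` is a wheel frame of `C`. -/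
def IsWheelFrame {ι : Type*} [DecidableEq ι] (C : Set (Finset ι)) (σ1 σ3 τ : Finset ι) :
    Prop :=
  σ1 ∈ neuralComplex C ∧ σ3 ∈ neuralComplex C ∧ τ ∈ neuralComplex C ∧
    (σ1 ∪ σ3 ∈ neuralComplex C ∧
      ∀ ω : Finset ι, ω ⊆ σ1 ∪ σ3 → ¬ω ⊆ σ1 → ¬ω ⊆ σ3 → ω ∪ τ ∈ neuralComplex C →
        trunk C (σ1 ∪ ω) = trunk C (σ1 ∪ σ3) ∧ trunk C (σ3 ∪ ω) = trunk C (σ1 ∪ σ3)) ∧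
    τ ∪ σ1 ∪ σ3 ∉ neuralComplex C ∧
    σ1 ∪ τ ∈ neuralComplex C ∧ σ3 ∪ τ ∈ neuralComplex C ∧
    σ1 ∩ σ3 = ∅ ∧
    trunk C τ ⊆ ⋃ i ∈ (σ1 ∪ σ3 : Finset ι), trunk C {i}

/-- A subset of `ℝ^d` is top-dimensional: every nonempty intersection with an open set
has nonempty interior. -/
def TopDimensional {d : ℕ} (S : Set (EuclideanSpace ℝ (Fin d))) : Prop :=
  ∀ O : Set (EuclideanSpace ℝ (Fin d)), IsOpen O → (S ∩ O).Nonempty →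
    (interior (S ∩ O)).Nonempty

/-- A realization is top-dimensional if each of its atoms is empty or top-dimensional. -/
def IsTopDimRealization {ι : Type*} {d : ℕ} (U : ι → Set (EuclideanSpace ℝ (Fin d))) :
    Prop :=
  ∀ c : Finset ι, codeAtom U c = ∅ ∨ TopDimensional (codeAtom U c)

/-- `C` is top-dimensionally convex. -/
def IsTopDimConvexCode {ι : Type*} (C : Set (Finset ι)) : Prop :=
  ∃ (d : ℕ) (U : ι → Set (EuclideanSpace ℝ (Fin d))),
    IsRealization C U ∧ IsTopDimRealization U ∧ ∀ i, Convex ℝ (U i)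

/-- The restriction `C|_χ = {c ∩ χ : c ∈ C}`, as a code on the neuron set `χ`. -/
def restrictCode {ι : Type*} [DecidableEq ι] (C : Set (Finset ι)) (χ : Finset ι) :
    Set (Finset {i : ι // i ∈ χ}) :=
  (fun c => c.subtype (· ∈ χ)) '' C

/-- Neuron `j` is trivial in `C`: no codeword contains it. -/
def TrivialNeuron {ι : Type*} (C : Set (Finset ι)) (j : ι) : Prop :=
  ∀ c ∈ C, j ∉ c

/-- Neuron `j` is redundant in `C`. -/
def RedundantNeuron {ι : Type*} [DecidableEq ι] (C : Set (Finset ι)) (j : ι) : Prop :=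
  ¬TrivialNeuron C j ∧ ∃ σ : Finset ι, j ∉ σ ∧ trunk C {j} = trunk C σ

/-- `C` is decomposable with embedded part supported on `φ`. -/
def IsDecomposable {ι : Type*} [DecidableEq ι] [Fintype ι] (C : Set (Finset ι))
    (φ : Finset ι) : Prop :=
  φ ≠ ∅ ∧ φ ≠ Finset.univ ∧
    ∃ ψ : Finset ι, Disjoint φ ψ ∧ ψ ≠ Finset.univ ∧ ψ ∈ C ∧
      ∀ c ∈ C, (c ∩ φ).Nonempty → ∃ φ' ⊆ φ, c = φ' ∪ ψ

end NeuralCode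

open NeuralCode

section Aux

open Set

open scoped Classical in
/-- The codeword of a point: the set of indices `i` with `u ∈ U i`. -/
noncomputable def ptcw {n d : ℕ} (U : Fin n → Set (EuclideanSpace ℝ (Fin d)))
    (u : EuclideanSpace ℝ (Fin d)) : Finset (Fin n) :=
  Finset.univ.filter (fun i => u ∈ U i)

variable {n d : ℕ} {C : Set (Finset (Fin n))} {U : Fin n → Set (EuclideanSpace ℝ (Fin d))}

lemma mem_ptcw {u : EuclideanSpace ℝ (Fin d)} {i : Fin n} : i ∈ ptcw U u ↔ u ∈ U i := by
  simp [ptcw]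

lemma mem_USet {σ : Finset (Fin n)} {u : EuclideanSpace ℝ (Fin d)} :
    u ∈ USet U σ ↔ ∀ i ∈ σ, u ∈ U i := by
  simp [USet]

lemma mem_USet_iff_subset {σ : Finset (Fin n)} {u : EuclideanSpace ℝ (Fin d)} :
    u ∈ USet U σ ↔ σ ⊆ ptcw U u := by
  simp [mem_USet, Finset.subset_iff, mem_ptcw]

lemma USet_mono {σ σ' : Finset (Fin n)} (h : σ ⊆ σ') : USet U σ' ⊆ USet U σ := by
  intro u hu
  rw [mem_USet] at hu ⊢
  exact fun i hi => hu i (h hi)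

lemma USet_union (σ τ : Finset (Fin n)) : USet U (σ ∪ τ) = USet U σ ∩ USet U τ := by
  ext u
  simp only [mem_USet, Set.mem_inter_iff, Finset.mem_union, or_imp, forall_and]

lemma ptcw_mem_code (hR : IsRealization C U) (u : EuclideanSpace ℝ (Fin d)) : ptcw U u ∈ C := by
  rw [hR.2]
  refine ⟨u, mem_USet_iff_subset.mpr (Finset.Subset.refl _), ?_⟩
  simp only [Set.mem_iUnion, not_exists]
  intro j hj
  exact fun hju => hj (mem_ptcw.mpr hju)

lemma USet_eq_of_trunk_eq (hR : IsRealization C U) {α β : Finset (Fin n)}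
    (h : trunk C α = trunk C β) : USet U α = USet U β := by
  ext u
  have hc := ptcw_mem_code hR u
  rw [mem_USet_iff_subset, mem_USet_iff_subset]
  constructor
  · intro hs
    have : ptcw U u ∈ trunk C α := ⟨hc, hs⟩
    rw [h] at this
    exact this.2
  · intro hs
    have : ptcw U u ∈ trunk C β := ⟨hc, hs⟩
    rw [← h] at this
    exact this.2

lemma USet_nonempty_of_face (hR : IsRealization C U) {σ : Finset (Fin n)}
    (h : σ ∈ neuralComplex C) : (USet U σ).Nonempty := by
  obtain ⟨c, hcC, hsub⟩ := h
  obtain ⟨p, hp⟩ := (hR.2 c).mp hcC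
  exact ⟨p, USet_mono hsub hp.1⟩

lemma USet_empty_of_not_face (hR : IsRealization C U) {σ : Finset (Fin n)}
    (h : σ ∉ neuralComplex C) : USet U σ = ∅ := by
  rw [Set.eq_empty_iff_forall_notMem]
  intro u hu
  exact h ⟨ptcw U u, ptcw_mem_code hR u, mem_USet_iff_subset.mp hu⟩

lemma isOpen_USet (hU : ∀ i, IsOpen (U i)) (σ : Finset (Fin n)) : IsOpen (USet U σ) :=
  isOpen_biInter_finset fun i _ => hU i

lemma convex_USet (hU : ∀ i, Convex ℝ (U i)) (σ : Finset (Fin n)) : Convex ℝ (USet U σ) :=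
  convex_iInter fun i => convex_iInter fun _ => hU i

end Aux

section Core

open Set AffineMap

set_option maxHeartbeats 1000000 in
/-- Core geometric lemma. -/
lemma wheel_core {E : Type*} [NormedAddCommGroup E] [NormedSpace ℝ E]
    {A B Z : Set E} (hAo : IsOpen A) (hZo : IsOpen Z)
    (hAc : Convex ℝ A) (hBc : Convex ℝ B) (hZc : Convex ℝ Z)
    (hZA : Z ∩ A ⊆ A ∩ B) (hZB : Z ∩ B ⊆ A ∩ B) (hMZ : A ∩ B ⊆ Z)
    {q x y z : E} (hq : q ∈ A ∩ B) (hx : x ∈ A) (hy : y ∈ B) (hz : z ∈ Z)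
    (hseg : z ∈ segment ℝ x y) : z ∈ A ∩ B := by
  obtain ⟨t1, t2, ht1, ht2, hts, hzxy⟩ := hseg
  -- degenerate endpoints
  rcases eq_or_lt_of_le ht2 with h20 | h2pos
  · have hzx : z = x := by rw [← hzxy, ← h20]; simp [show t1 = 1 by linarith]
    exact hZA ⟨hz, hzx ▸ hx⟩
  rcases eq_or_lt_of_le ht1 with h10 | h1pos
  · have hzy : z = y := by rw [← hzxy, ← h10]; simp [show t2 = 1 by linarith]
    exact hZB ⟨hz, hzy ▸ hy⟩
  have ht2lt : t2 < 1 := by linarith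
  have ht1lt : t1 < 1 := by linarith
  set u : ℝ →ᵃ[ℝ] E := AffineMap.lineMap z q with hu
  have hcont : Continuous u := AffineMap.lineMap_continuous
  have huapp : ∀ s : ℝ, u s = (1 - s) • z + s • q := fun s =>
    AffineMap.lineMap_apply_module z q s
  have hu0 : u 0 = z := by rw [huapp]; simp
  have hu1 : u 1 = q := by rw [huapp]; simp
  have hqZ : q ∈ Z := hMZ hq
  have huZ : ∀ s ∈ Icc (0:ℝ) 1, u s ∈ Z := by
    intro s hs
    rw [huapp]
    exact hZc hz hqZ (by linarith [hs.2]) hs.1 (by ring)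
  set I : Set ℝ := Icc (0:ℝ) 1 ∩ u ⁻¹' A with hI
  have hIM : ∀ s ∈ I, u s ∈ A ∩ B := fun s hs => hZA ⟨huZ s hs.1, hs.2⟩
  have h1I : (1:ℝ) ∈ I :=
    ⟨⟨zero_le_one, le_refl 1⟩, by simp only [Set.mem_preimage, hu1]; exact hq.1⟩
  by_cases h0 : (0:ℝ) ∈ I
  · have := hIM 0 h0; rwa [hu0] at this
  have hIconv : Convex ℝ I := (convex_Icc 0 1).inter (hAc.affine_preimage u)
  have hne : I.Nonempty := ⟨1, h1I⟩
  have hbdd : BddBelow I := ⟨0, fun s hs => hs.1.1⟩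
  set s₀ := sInf I with hs₀
  have hs0 : 0 ≤ s₀ := le_csInf hne fun s hs => hs.1.1
  have hs1 : s₀ ≤ 1 := csInf_le hbdd h1I
  have hIoc : ∀ s, s₀ < s → s ≤ 1 → s ∈ I := by
    intro s hlt hle
    obtain ⟨s', hs'I, hs's⟩ := exists_lt_of_csInf_lt hne hlt
    exact hIconv.ordConnected.out hs'I h1I ⟨hs's.le, hle⟩
  set w := u s₀ with hw
  have hwZ : w ∈ Z := huZ s₀ ⟨hs0, hs1⟩
  have hwA : w ∉ A := by
    intro hwA
    have hop : IsOpen (u ⁻¹' A) := hAo.preimage hcont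
    obtain ⟨ε, hε, hball⟩ := Metric.isOpen_iff.mp hop s₀ hwA
    rcases eq_or_lt_of_le hs0 with h00 | hposs
    · refine h0 ⟨⟨le_refl _, zero_le_one⟩, ?_⟩
      show u 0 ∈ A
      rw [h00]
      exact hwA
    · set s := max (s₀ - ε/2) (s₀ / 2) with hsdef
      have hlt : s < s₀ := max_lt (by linarith) (by linarith)
      have hpos : 0 < s := lt_of_lt_of_le (by linarith : 0 < s₀ / 2) (le_max_right _ _)
      have hd : dist s s₀ < ε := by
        rw [Real.dist_eq, abs_sub_lt_iff]
        have := le_max_left (s₀ - ε/2) (s₀ / 2)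
        constructor <;> linarith
      have hsI : s ∈ I := ⟨⟨hpos.le, by linarith⟩, hball hd⟩
      exact absurd (csInf_le hbdd hsI) (not_le.mpr hlt)
  have hs1' : s₀ < 1 := by
    rcases eq_or_lt_of_le hs1 with h | h
    · exfalso; apply hwA; rw [hw, h, hu1]; exact hq.1
    · exact h
  have hwM : w ∈ closure (A ∩ B) := by
    have htend : Filter.Tendsto u (nhdsWithin s₀ (Ioi s₀)) (nhds w) :=
      (hcont.tendsto s₀).mono_left nhdsWithin_le_nhds
    have hev : ∀ᶠ s in nhdsWithin s₀ (Ioi s₀), u s ∈ A ∩ B := by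
      filter_upwards [Ioo_mem_nhdsGT_of_mem ⟨le_refl s₀, hs1'⟩] with s hs
      exact hIM s (hIoc s hs.1 hs.2.le)
    exact mem_closure_of_tendsto htend hev
  have hwB : w ∉ B := fun h => hwA (hZB ⟨hwZ, h⟩).1
  -- the auxiliary point b' on segment [y, q]
  set β := (1 - s₀) * t2 + s₀ with hβ
  have hmm : (1 - s₀) * t1 + (1 - s₀) * t2 = 1 - s₀ := by rw [← mul_add, hts, mul_one]
  have hβ0 : 0 < β := by nlinarith [mul_nonneg hs0 (by linarith : (0:ℝ) ≤ 1 - t2)]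
  have hβ1 : β < 1 := by
    have h1 := mul_pos (show (0:ℝ) < 1 - s₀ by linarith) h1pos
    linarith
  set b' := ((1 - s₀) * t2 / β) • y + (s₀ / β) • q with hb'
  have hb'B : b' ∈ B := by
    refine hBc hy hq.2 (div_nonneg (mul_nonneg (by linarith) ht2) hβ0.le)
      (div_nonneg hs0 hβ0.le) ?_
    rw [← add_div, hβ, div_self (by rw [← hβ]; exact hβ0.ne')]
  have hβx : 1 - β = (1 - s₀) * t1 := by rw [hβ]; linear_combination (s₀ - 1) * hts
  have hβb : β • b' = ((1 - s₀) * t2) • y + s₀ • q := by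
    have e1 : β * ((1 - s₀) * t2 / β) = (1 - s₀) * t2 := by field_simp
    have e2 : β * (s₀ / β) = s₀ := by field_simp
    rw [hb', smul_add, smul_smul, smul_smul, e1, e2]
  have hwcomb : w = (1 - β) • x + β • b' := by
    rw [hw, huapp, ← hzxy, hβb, hβx]
    module
  -- the point v close to w inside A ∩ Z
  set f : ℝ → E := fun μ => μ • x + (1 - μ) • w with hf
  have hfc : Continuous f := by fun_prop
  have hf0 : f 0 = w := by simp [hf]
  have hop : IsOpen (f ⁻¹' Z) := hZo.preimage hfc
  obtain ⟨ε, hε, hball⟩ := Metric.isOpen_iff.mp hop 0 (by rw [Set.mem_preimage, hf0]; exact hwZ)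
  set μ := min (ε/2) (1/2 : ℝ) with hμ
  have hμ0 : 0 < μ := lt_min (by linarith) (by norm_num)
  have hμ1 : μ < 1 := lt_of_le_of_lt (min_le_right _ _) (by norm_num)
  have hμd : dist μ 0 < ε := by
    rw [Real.dist_eq, sub_zero, abs_of_pos hμ0]
    exact lt_of_le_of_lt (min_le_left _ _) (by linarith)
  have hvZ : f μ ∈ Z := hball hμd
  have hvA : f μ ∈ A := by
    have hxint : x ∈ interior A := by rwa [hAo.interior_eq]
    have hwcl : w ∈ closure A := closure_mono Set.inter_subset_left hwM
    have := hAc.combo_interior_closure_mem_interior hxint hwcl hμ0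
      (by linarith : (0:ℝ) ≤ 1 - μ) (by ring)
    rwa [hAo.interior_eq] at this
  have hvB : f μ ∈ B := (hZA ⟨hvZ, hvA⟩).2
  -- final: w is a convex combination of v = f μ and b', both in B
  set D := 1 - β + β * μ with hD
  have hD0 : 0 < D := by
    have h1 := mul_pos hβ0 hμ0
    rw [hD]; linarith
  have hDs : ((1 - β) / D) • (f μ) + (μ * β / D) • b'
      = (1/D) • ((1 - β) • (f μ) + (μ * β) • b') := by
    module
  have hfμ : f μ = μ • x + (1 - μ) • w := rfl
  have hinner : (1 - β) • (f μ) + (μ * β) • b' = D • w := by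
    rw [hfμ, hwcomb, hD]
    module
  have hcomb : ((1 - β) / D) • (f μ) + (μ * β / D) • b' = w := by
    rw [hDs, hinner, smul_smul, one_div_mul_cancel hD0.ne', one_smul]
  have hsum : (1 - β) / D + μ * β / D = 1 := by
    rw [← add_div, div_eq_one_iff_eq hD0.ne', hD]
    ring
  have hfin : ((1 - β) / D) • (f μ) + (μ * β / D) • b' ∈ B :=
    hBc hvB hb'B (div_nonneg (by linarith) hD0.le)
      (div_nonneg (by positivity) hD0.le) hsum
  rw [hcomb] at hfin
  exact absurd hfin hwB

end Core

section Mixed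

open Set

variable {n d : ℕ} {C : Set (Finset (Fin n))} {U : Fin n → Set (EuclideanSpace ℝ (Fin d))}

/-- If the hub `USet U τ` is convex, a wheel frame produces a "mixed" face `ω` together
with a segment witness. -/
lemma exists_mixed {σ1 σ3 τ : Finset (Fin n)} (hF : IsWheelFrame C σ1 σ3 τ)
    (hR : IsRealization C U) (hτc : Convex ℝ (USet U τ)) :
    ∃ (ω : Finset (Fin n)) (x y zz : EuclideanSpace ℝ (Fin d)),
      ω ⊆ σ1 ∪ σ3 ∧ ¬ω ⊆ σ1 ∧ ¬ω ⊆ σ3 ∧ ω ∪ τ ∈ neuralComplex C ∧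
      x ∈ USet U σ1 ∩ USet U τ ∧ y ∈ USet U σ3 ∩ USet U τ ∧
      zz ∈ segment ℝ x y ∧ zz ∈ USet U ω ∧ zz ∈ USet U τ := by
  obtain ⟨h1Δ, h3Δ, hτΔ, ⟨hfaceΔ, hFi⟩, hFii, h1τΔ, h3τΔ, hdisj, hcov⟩ := hF
  -- σ1 and σ3 are nonempty
  have hσ1ne : σ1.Nonempty := by
    rcases Finset.eq_empty_or_nonempty σ1 with h | h
    · exfalso
      apply hFii
      have he : τ ∪ σ1 ∪ σ3 = σ3 ∪ τ := by
        rw [h]; ext a; simp [Finset.mem_union]; tauto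
      rw [he]; exact h3τΔ
    · exact h
  have hσ3ne : σ3.Nonempty := by
    rcases Finset.eq_empty_or_nonempty σ3 with h | h
    · exfalso
      apply hFii
      have he : τ ∪ σ1 ∪ σ3 = σ1 ∪ τ := by
        rw [h]; ext a; simp [Finset.mem_union]; tauto
      rw [he]; exact h1τΔ
    · exact h
  obtain ⟨x, hx⟩ := USet_nonempty_of_face hR h1τΔ
  rw [USet_union] at hx
  obtain ⟨y, hy⟩ := USet_nonempty_of_face hR h3τΔ
  rw [USet_union] at hy
  have hsegτ : segment ℝ x y ⊆ USet U τ := hτc.segment_subset hx.2 hy.2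
  set V1 : Set (EuclideanSpace ℝ (Fin d)) := ⋃ i ∈ σ1, U i with hV1
  set V3 : Set (EuclideanSpace ℝ (Fin d)) := ⋃ i ∈ σ3, U i with hV3
  have hV1o : IsOpen V1 := isOpen_biUnion fun i _ => hR.1 i
  have hV3o : IsOpen V3 := isOpen_biUnion fun i _ => hR.1 i
  have hcover : segment ℝ x y ⊆ V1 ∪ V3 := by
    intro u hu
    have huτ := hsegτ hu
    have htr : ptcw U u ∈ trunk C τ := ⟨ptcw_mem_code hR u, mem_USet_iff_subset.mp huτ⟩
    have := hcov htr
    simp only [Set.mem_iUnion] at this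
    obtain ⟨i, hi, hitr⟩ := this
    have hiu : u ∈ U i := mem_ptcw.mp (hitr.2 (Finset.mem_singleton_self i))
    rcases Finset.mem_union.mp hi with h | h
    · exact Or.inl (Set.mem_biUnion h hiu)
    · exact Or.inr (Set.mem_biUnion h hiu)
  have hxV1 : x ∈ V1 := by
    obtain ⟨i, hi⟩ := hσ1ne
    exact Set.mem_biUnion hi (mem_USet.mp hx.1 i hi)
  have hyV3 : y ∈ V3 := by
    obtain ⟨j, hj⟩ := hσ3ne
    exact Set.mem_biUnion hj (mem_USet.mp hy.1 j hj)
  have hpc : IsPreconnected (segment ℝ x y) := (convex_segment x y).isPreconnected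
  obtain ⟨zz, hzzseg, hzzV⟩ := hpc V1 V3 hV1o hV3o hcover
    ⟨x, left_mem_segment ℝ x y, hxV1⟩ ⟨y, right_mem_segment ℝ x y, hyV3⟩
  obtain ⟨hzz1, hzz3⟩ := hzzV
  simp only [hV1, hV3, Set.mem_iUnion] at hzz1 hzz3
  obtain ⟨i, hi, hzi⟩ := hzz1
  obtain ⟨j, hj, hzj⟩ := hzz3
  have hzzτ : zz ∈ USet U τ := hsegτ hzzseg
  refine ⟨(σ1 ∪ σ3) ∩ ptcw U zz, x, y, zz, Finset.inter_subset_left, ?_, ?_, ?_, hx, hy,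
    hzzseg, mem_USet_iff_subset.mpr Finset.inter_subset_right, hzzτ⟩
  · intro h
    have hjmem : j ∈ (σ1 ∪ σ3) ∩ ptcw U zz :=
      Finset.mem_inter.mpr ⟨Finset.mem_union_right _ hj, mem_ptcw.mpr hzj⟩
    have : j ∈ σ1 ∩ σ3 := Finset.mem_inter.mpr ⟨h hjmem, hj⟩
    rw [hdisj] at this
    exact absurd this (Finset.notMem_empty j)
  · intro h
    have himem : i ∈ (σ1 ∪ σ3) ∩ ptcw U zz :=
      Finset.mem_inter.mpr ⟨Finset.mem_union_left _ hi, mem_ptcw.mpr hzi⟩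
    have : i ∈ σ1 ∩ σ3 := Finset.mem_inter.mpr ⟨hi, h himem⟩
    rw [hdisj] at this
    exact absurd this (Finset.notMem_empty i)
  · exact ⟨ptcw U zz, ptcw_mem_code hR zz,
      Finset.union_subset Finset.inter_subset_right (mem_USet_iff_subset.mp hzzτ)⟩

end Mixed

section MainHelpers

open Set

variable {n d : ℕ} {C : Set (Finset (Fin n))} {U : Fin n → Set (EuclideanSpace ℝ (Fin d))}

lemma USet_hub_empty {σ1 σ3 τ : Finset (Fin n)} (hF : IsWheelFrame C σ1 σ3 τ)
    (hR : IsRealization C U) :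
    USet U (σ1 ∪ σ3) ∩ USet U τ = ∅ := by
  obtain ⟨-, -, -, -, hFii, -⟩ := hF
  rw [← USet_union]
  apply USet_empty_of_not_face hR
  have he : σ1 ∪ σ3 ∪ τ = τ ∪ σ1 ∪ σ3 := by
    ext a; simp [Finset.mem_union]; tauto
  rw [he]
  exact hFii

end MainHelpers

/-- a wheel frame generates, in every realization, a wheel
(for some middle spoke `σ2`); consequently codes with wheel frames are non-convex. -/
theorem wheel_frame_generates_wheel {n : ℕ} (C : Set (Finset (Fin n)))
    (σ1 σ3 τ : Finset (Fin n)) (hF : IsWheelFrame C σ1 σ3 τ) :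
    (∀ (d : ℕ) (U : Fin n → Set (EuclideanSpace ℝ (Fin d))), IsRealization C U →
        ∃ σ2 : Finset (Fin n),
          WheelWi U σ1 σ2 σ3 ∧ WheelWii U σ1 σ2 σ3 τ ∧ WheelWiii U σ1 σ2 σ3 τ) ∧
    ¬IsConvexCode C := by
  classical
  have hFi := (hF.2.2.2.1).2
  have hfaceΔ := (hF.2.2.2.1).1
  constructor
  · -- every realization contains a wheel
    intro d U hR
    have hM1 : USet U (σ1 ∪ σ3) ⊆ USet U σ1 := USet_mono Finset.subset_union_left
    have hM3 : USet U (σ1 ∪ σ3) ⊆ USet U σ3 := USet_mono Finset.subset_union_right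
    have eAB : USet U σ1 ∩ USet U σ3 = USet U (σ1 ∪ σ3) := (USet_union σ1 σ3).symm
    have hMne : (USet U (σ1 ∪ σ3)).Nonempty := USet_nonempty_of_face hR hfaceΔ
    have eZT : USet U (σ1 ∪ σ3) ∩ USet U τ = ∅ := USet_hub_empty hF hR
    by_cases hτc : Convex ℝ (USet U τ)
    · -- convex hub: use the mixed face as the middle spoke
      obtain ⟨ω, x, y, zz, hω1, hω2, hω3, hω4, hx, hy, hzzseg, hzzω, hzzτ⟩ :=
        exists_mixed hF hR hτc
      obtain ⟨htr1, htr3⟩ := hFi ω hω1 hω2 hω3 hω4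
      have eAZ : USet U σ1 ∩ USet U ω = USet U (σ1 ∪ σ3) := by
        rw [← USet_union]; exact USet_eq_of_trunk_eq hR htr1
      have eBZ : USet U σ3 ∩ USet U ω = USet U (σ1 ∪ σ3) := by
        rw [← USet_union]; exact USet_eq_of_trunk_eq hR htr3
      have etriple : USet U σ1 ∩ USet U ω ∩ USet U σ3 = USet U (σ1 ∪ σ3) := by
        rw [eAZ]; exact Set.inter_eq_left.mpr hM3
      refine ⟨ω, ⟨?_, ?_, ?_, ?_⟩, ?_, ?_⟩
      · rw [etriple, eAZ]
      · rw [etriple, eAB]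
      · rw [etriple, Set.inter_comm, eBZ]
      · rw [etriple]; exact hMne
      · show _ ∩ _ ∩ _ ∩ _ = ∅
        rw [etriple]; exact eZT
      · intro _
        exact ⟨x, hx, y, hy, zz, hzzseg, hzzω, hzzτ⟩
    · -- non-convex hub: W(iii) is vacuous, take σ2 = σ1 ∪ σ3
      have eAZ : USet U σ1 ∩ USet U (σ1 ∪ σ3) = USet U (σ1 ∪ σ3) :=
        Set.inter_eq_right.mpr hM1
      have etriple : USet U σ1 ∩ USet U (σ1 ∪ σ3) ∩ USet U σ3 = USet U (σ1 ∪ σ3) := by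
        rw [eAZ]; exact Set.inter_eq_left.mpr hM3
      refine ⟨σ1 ∪ σ3, ⟨?_, ?_, ?_, ?_⟩, ?_, ?_⟩
      · rw [etriple, eAZ]
      · rw [etriple, eAB]
      · rw [etriple, Set.inter_comm]
        exact Set.inter_eq_right.mpr hM3
      · rw [etriple]; exact hMne
      · show _ ∩ _ ∩ _ ∩ _ = ∅
        rw [etriple]; exact eZT
      · rintro ⟨hc, -⟩
        exact absurd hc hτc
  · -- non-convexity
    rintro ⟨d, U, hR, hUc⟩
    have hτc : Convex ℝ (USet U τ) := convex_USet hUc τ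
    obtain ⟨ω, x, y, zz, hω1, hω2, hω3, hω4, hx, hy, hzzseg, hzzω, hzzτ⟩ :=
      exists_mixed hF hR hτc
    obtain ⟨htr1, htr3⟩ := hFi ω hω1 hω2 hω3 hω4
    have eAB : USet U σ1 ∩ USet U σ3 = USet U (σ1 ∪ σ3) := (USet_union σ1 σ3).symm
    have eAZ : USet U σ1 ∩ USet U ω = USet U (σ1 ∪ σ3) := by
      rw [← USet_union]; exact USet_eq_of_trunk_eq hR htr1
    have eBZ : USet U σ3 ∩ USet U ω = USet U (σ1 ∪ σ3) := by
      rw [← USet_union]; exact USet_eq_of_trunk_eq hR htr3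
    obtain ⟨q, hq⟩ := USet_nonempty_of_face hR hfaceΔ
    have eZT : USet U (σ1 ∪ σ3) ∩ USet U τ = ∅ := USet_hub_empty hF hR
    have hzAB : zz ∈ USet U σ1 ∩ USet U σ3 := by
      refine wheel_core (q := q) (isOpen_USet hR.1 σ1) (isOpen_USet hR.1 ω)
        (convex_USet hUc σ1) (convex_USet hUc σ3) (convex_USet hUc ω)
        ?_ ?_ ?_ ?_ hx.1 hy.1 hzzω hzzseg
      · rw [Set.inter_comm, eAZ, ← eAB]
      · rw [Set.inter_comm, eBZ, ← eAB]
      · rw [eAB]; exact USet_mono hω1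
      · rw [eAB]; exact hq
    have : zz ∈ USet U (σ1 ∪ σ3) ∩ USet U τ := ⟨eAB ▸ hzAB, hzzτ⟩
    rw [eZT] at this
    exact this
end

section
/- If a code C on n neurons has a wheel frame, then C has a wheel frame (σ1, σ3, τ̃) in which τ̃ is a max-intersection face of Δ(C): τ̃ equals the intersection of two or more distinct facets of Δ(C). -/
open NeuralCode

/-- Every codeword is contained in a facet. -/
lemma exists_facet_above {n : ℕ} (C : Set (Finset (Fin n))) {c : Finset (Fin n)}
    (hc : c ∈ C) : ∃ F, IsFacet C F ∧ c ⊆ F := by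
  have hfin : {d : Finset (Fin n) | d ∈ C ∧ c ⊆ d}.Finite := Set.toFinite _
  obtain ⟨F, hF, hmax⟩ := Set.Finite.exists_maximalFor Finset.card _ hfin ⟨c, hc, le_refl _⟩
  refine ⟨F, ⟨hF.1, fun d hd hFd => ?_⟩, hF.2⟩
  have hd' : d ∈ {d : Finset (Fin n) | d ∈ C ∧ c ⊆ d} := ⟨hd, hF.2.trans hFd⟩
  have := hmax (j := d) hd' (Finset.card_le_card hFd)
  exact (Finset.eq_of_subset_of_card_le hFd this).symm

/-- bubble-up property for wheel frames. -/
theorem wheel_frame_bubbles_up {n : ℕ} (C : Set (Finset (Fin n)))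
    (h : ∃ σ1 σ3 τ : Finset (Fin n), IsWheelFrame C σ1 σ3 τ) :
    ∃ σ1 σ3 τ : Finset (Fin n), IsWheelFrame C σ1 σ3 τ ∧ IsMaxIntersectionFace C τ := by
  obtain ⟨σ1, σ3, τ, h1, h3, hτ, ⟨h13, hω⟩, hii, hiii1, hiii3, hdisj, hcov⟩ := h
  obtain ⟨c1, hc1, hsc1⟩ := hiii1
  obtain ⟨c3, hc3, hsc3⟩ := hiii3
  obtain ⟨F1, hF1, hcF1⟩ := exists_facet_above C hc1
  obtain ⟨F3, hF3, hcF3⟩ := exists_facet_above C hc3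
  have hs1F1 : σ1 ∪ τ ⊆ F1 := hsc1.trans hcF1
  have hs3F3 : σ3 ∪ τ ⊆ F3 := hsc3.trans hcF3
  have hσ1F1 : σ1 ⊆ F1 := Finset.union_subset_left hs1F1
  have hτF1 : τ ⊆ F1 := Finset.union_subset_right hs1F1
  have hσ3F3 : σ3 ⊆ F3 := Finset.union_subset_left hs3F3
  have hτF3 : τ ⊆ F3 := Finset.union_subset_right hs3F3
  set τ' := F1 ∩ F3 with hτ'
  have hττ' : τ ⊆ τ' := Finset.subset_inter hτF1 hτF3
  have hτ'F1 : τ' ⊆ F1 := Finset.inter_subset_left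
  have hτ'F3 : τ' ⊆ F3 := Finset.inter_subset_right
  have hne : F1 ≠ F3 := by
    intro he
    exact hii ⟨F1, hF1.1, Finset.union_subset (Finset.union_subset hτF1 hσ1F1)
      (he ▸ hσ3F3)⟩
  refine ⟨σ1, σ3, τ', ⟨h1, h3, ⟨F1, hF1.1, hτ'F1⟩, ⟨h13, ?_⟩, ?_, ?_, ?_, hdisj, ?_⟩, ?_, ?_⟩
  · intro ω hsub hn1 hn3 hred
    apply hω ω hsub hn1 hn3
    obtain ⟨c, hc, hsc⟩ := hred
    exact ⟨c, hc, (Finset.union_subset_union_right hττ').trans hsc⟩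
  · intro ⟨c, hc, hsc⟩
    exact hii ⟨c, hc, (Finset.union_subset_union_left
      (Finset.union_subset_union_left hττ')).trans hsc⟩
  · exact ⟨F1, hF1.1, Finset.union_subset hσ1F1 hτ'F1⟩
  · exact ⟨F3, hF3.1, Finset.union_subset hσ3F3 hτ'F3⟩
  · intro c hc
    exact hcov ⟨hc.1, hττ'.trans hc.2⟩
  · exact ⟨F1, hF1.1, hτ'F1⟩
  · refine ⟨{F1, F3}, ?_, ?_, ?_⟩
    · rw [Finset.card_pair hne]
    · intro F hF
      rcases Finset.mem_insert.mp hF with h | h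
      · exact h ▸ hF1
      · exact (Finset.mem_singleton.mp h) ▸ hF3
    · simp [hτ', Finset.inf_insert]
end
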